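/- Let V : H → K be an isometry with range invariant under T* for a bounded operator T on K, and set S = V* T V. Then ‖f(S)‖ ≤ ‖f(T)‖ for every polynomial f in one variable. In particular, if T is a contraction then S is a contraction. -/

import Mathlib

open ContinuousLinearMap Filter Topology

/-- If `V : H → K` is an isometry whose range is invariant under `T*`, and `S = V* T V`,
then `‖f(S)‖ ≤ ‖f(T)‖` for every polynomial `f` in one variable; in particular, if `T`
is a contraction, then `S` is a contraction. -/
theorem stmt_10 {H K : Type*} [NormedAddCommGroup H] [InnerProductSpace ℂ H] [CompleteSpace H]
    [NormedAddCommGroup K] [InnerProductSpace ℂ K] [CompleteSpace K]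
    (V : H →L[ℂ] K) (hV : ∀ x : H, ‖V x‖ = ‖x‖)
    (T : K →L[ℂ] K) (hinv : ∀ x : H, ∃ y : H, V y = adjoint T (V x))
    (S : H →L[ℂ] H) (hS : S = (adjoint V).comp (T.comp V)) :
    (∀ f : Polynomial ℂ, ‖Polynomial.aeval S f‖ ≤ ‖Polynomial.aeval T f‖) ∧
    (‖T‖ ≤ 1 → ‖S‖ ≤ 1) := by
  -- V* V = 1
  have li : H →ₗᵢ[ℂ] K := ⟨V.toLinearMap, hV⟩
  have hVV : (adjoint V).comp V = ContinuousLinearMap.id ℂ H := by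
    ext x
    apply ext_inner_right ℂ
    intro y
    simp only [coe_comp', Function.comp_apply, adjoint_inner_left, coe_id', id_eq]
    exact (LinearIsometry.inner_map_map ⟨V.toLinearMap, hV⟩ x y)
  -- V* T V V* = V* T
  have hkey : ((adjoint V).comp T).comp (V.comp (adjoint V)) = (adjoint V).comp T := by
    -- first: V V* T* V = T* V
    have h1 : (V.comp (adjoint V)).comp ((adjoint T).comp V) = (adjoint T).comp V := by
      ext x
      obtain ⟨y, hy⟩ := hinv x
      simp only [coe_comp', Function.comp_apply]
      rw [← hy]
      have : adjoint V (V y) = y := congrFun (congrArg DFunLike.coe hVV) y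
      rw [this, hy]
    have := congrArg adjoint h1
    simpa [adjoint_comp, adjoint_adjoint, comp_assoc] using this
  -- S^n = V* T^n V
  have hpow : ∀ n : ℕ, S ^ n = (adjoint V).comp ((T ^ n).comp V) := by
    intro n
    have hk : ∀ k : K, adjoint V (T (V (adjoint V k))) = adjoint V (T k) := by
      intro k
      have := congrArg (fun f : K →L[ℂ] H => f k) hkey
      simpa using this
    induction n with
    | zero =>
      ext x
      have := congrArg (fun f : H →L[ℂ] H => f x) hVV
      simpa using this.symm
    | succ n ih =>
      ext x
      rw [pow_succ', ContinuousLinearMap.mul_apply, ih, hS]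
      simp only [coe_comp', Function.comp_apply]
      rw [hk (T ^ n <| V x)]
      simp [pow_succ', ContinuousLinearMap.mul_apply]
  -- f(S) = V* f(T) V
  have haeval : ∀ f : Polynomial ℂ,
      (Polynomial.aeval S f : H →L[ℂ] H) = (adjoint V).comp ((Polynomial.aeval T f).comp V) := by
    intro f
    induction f using Polynomial.induction_on' with
    | add p q hp hq =>
      simp only [map_add, hp, hq]
      ext x; simp
    | monomial n a =>
      simp only [Polynomial.aeval_monomial]
      rw [hpow n]
      ext x
      simp [Algebra.algebraMap_eq_smul_one, ContinuousLinearMap.mul_apply]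
  -- norm bounds
  have hVn : ‖V‖ ≤ 1 := V.opNorm_le_bound zero_le_one (fun x => by rw [hV, one_mul])
  have hVan : ‖adjoint V‖ ≤ 1 := by
    rw [show ‖adjoint V‖ = ‖V‖ from LinearIsometryEquiv.norm_map _ V]
    exact hVn
  have main : ∀ f : Polynomial ℂ, ‖Polynomial.aeval S f‖ ≤ ‖Polynomial.aeval T f‖ := by
    intro f
    rw [haeval f]
    calc ‖(adjoint V).comp ((Polynomial.aeval T f).comp V)‖
        ≤ ‖adjoint V‖ * ‖(Polynomial.aeval T f).comp V‖ := opNorm_comp_le _ _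
      _ ≤ ‖adjoint V‖ * (‖(Polynomial.aeval T f : K →L[ℂ] K)‖ * ‖V‖) := by
          gcongr; exact opNorm_comp_le _ _
      _ ≤ 1 * (‖(Polynomial.aeval T f : K →L[ℂ] K)‖ * 1) := by
          gcongr
      _ = ‖(Polynomial.aeval T f : K →L[ℂ] K)‖ := by ring
  refine ⟨main, fun hT => ?_⟩
  have h2 : ‖S‖ ≤ ‖T‖ := by simpa using main Polynomial.X
  exact h2.trans hT
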